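/- Let X and V be complex Hilbert spaces with X separable, and let A : X → X* be a positive linear operator with factorization A = S*TS, where S : X → V is compact and injective and T : V → V is bounded and coercive on Range(S). Let {f_α}_{α>0} be a family of filter functions for the spectral data of A, and for ℓ ∈ X* let x_α denote the regularized solution of Ax = ℓ. Then ℓ ∈ Range(S*) if and only if liminf_{α→0} ⟨x_α, Ax_α⟩_{X×X*} < ∞. -/

import Mathlib

open Complex InnerProductSpace Filter Topology ENNReal TopologicalSpace

noncomputable section

local notation "⟪" x ", " y "⟫" => @inner ℂ _ _ x y

/-- `X*`: the continuous dual of a complex Hilbert space `X`, modeled as the space of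
continuous conjugate-linear functionals, so that the dual pairing
`⟨x, ℓ⟩_{X×X*} := conj (ℓ x)` is sesquilinear (linear in `x`, conjugate-linear in `ℓ`). -/
abbrev ADual (X : Type*) [NormedAddCommGroup X] [InnerProductSpace ℂ X] := X →L⋆[ℂ] ℂ

section defs
variable {X : Type*} [NormedAddCommGroup X] [InnerProductSpace ℂ X]

/-- The sesquilinear dual pairing `⟨x, ℓ⟩_{X×X*}`. -/
def dpair (x : X) (ℓ : ADual X) : ℂ := starRingEnd ℂ (ℓ x)

variable [CompleteSpace X]

/-- `J : X* → X`, the Riesz isometry, determined by `(x, Jℓ)_X = ⟨x, ℓ⟩_{X×X*}`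
(with the paper's inner product, linear in the first slot; in Mathlib's convention
this reads `⟪Jℓ, x⟫ = conj (ℓ x)` for all `x`). -/
def rieszJ (ℓ : ADual X) : X :=
  (InnerProductSpace.toDual ℂ X).symm
    { toFun := fun x => starRingEnd ℂ (ℓ x)
      map_add' := fun x y => by simp
      map_smul' := fun c x => by simp [mul_comm]
      cont := continuous_star.comp ℓ.continuous }

/-- A bounded operator `A : X → X*` is positive if `⟨x, Ax⟩_{X×X*} > 0`
(i.e. it is a positive real number) for every `x ≠ 0`. -/
def IsPositiveOp (A : X →L[ℂ] ADual X) : Prop :=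
  ∀ x : X, x ≠ 0 → 0 < (dpair x (A x)).re ∧ (dpair x (A x)).im = 0

/-- Spectral data `{λ_n; x_n; ℓ_n}` of a positive compact operator `A : X → X*`:
a nonincreasing sequence `λ_n > 0` tending to `0`, an orthonormal basis `x_n` of `X`
of eigenvectors of `JA` with `(JA)x_n = λ_n x_n`, and the dual basis `ℓ_n = J⁻¹x_n`. -/
structure SpectralData (A : X →L[ℂ] ADual X) (lam : ℕ → ℝ) (e : ℕ → X)
    (l : ℕ → ADual X) : Prop where
  pos : ∀ n, 0 < lam n
  anti : Antitone lam
  tendsto_zero : Tendsto lam atTop (𝓝 0)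
  orthonormal : Orthonormal ℂ e
  complete : (Submodule.span ℂ (Set.range e)).topologicalClosure = ⊤
  eig : ∀ n, rieszJ (A (e n)) = (lam n : ℂ) • e n
  dual_basis : ∀ n, rieszJ (l n) = e n

/-- A family of filter functions `f_α : (0, λ₁] → [0, ∞)`, `α > 0`, with
`f_α(t) → 1` as `α → 0` for every `t ∈ (0, λ₁]` and `f_α(t) ≤ C_reg`. -/
def IsFilterFamily (lam : ℕ → ℝ) (Creg : ℝ) (f : ℝ → ℝ → ℝ) : Prop :=
  0 < Creg ∧
    (∀ t ∈ Set.Ioc (0 : ℝ) (lam 0), Tendsto (fun α => f α t) (𝓝[>] (0 : ℝ)) (𝓝 1)) ∧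
    (∀ α > (0 : ℝ), ∀ t ∈ Set.Ioc (0 : ℝ) (lam 0), 0 ≤ f α t ∧ f α t ≤ Creg)

/-- `x_α`, the regularized solution of `Ax = ℓ` for the filter family `f`:
`x_α = Σ_n (f_α(λ_n)/λ_n) conj(⟨x_n, ℓ⟩) x_n`. -/
def IsRegSolution (lam : ℕ → ℝ) (e : ℕ → X) (f : ℝ → ℝ → ℝ) (ℓ : ADual X)
    (xa : ℝ → X) : Prop :=
  ∀ α : ℝ, 0 < α →
    HasSum
      (fun n => (((f α (lam n) / lam n : ℝ) : ℂ) * starRingEnd ℂ (dpair (e n) ℓ)) • e n)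
      (xa α)

end defs

section adj
variable {X V : Type*} [NormedAddCommGroup X] [InnerProductSpace ℂ X] [CompleteSpace X]
  [NormedAddCommGroup V] [InnerProductSpace ℂ V] [CompleteSpace V]

/-- The adjoint `S* : V → X*` of a bounded operator `S : X → V`, determined by
`(Sx, v)_V = ⟨x, S*v⟩_{X×X*}` for all `x ∈ X`, `v ∈ V`. -/
def hadj (S : X →L[ℂ] V) : V →L[ℂ] ADual X :=
  LinearMap.mkContinuous
    { toFun := fun v =>
        { toFun := fun x => ⟪S x, v⟫
          map_add' := fun x y => by simp [inner_add_left]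
          map_smul' := fun c x => by simp [inner_smul_left, mul_comm]
          cont := (S.continuous.inner continuous_const) }
      map_add' := fun v w => by ext x; simp [inner_add_right]
      map_smul' := fun c v => by ext x; simp [inner_smul_right] }
    ‖S‖
    (fun v => by
      apply ContinuousLinearMap.opNorm_le_bound
      · positivity
      · intro x
        calc ‖⟪S x, v⟫‖ ≤ ‖S x‖ * ‖v‖ := norm_inner_le_norm _ _
          _ ≤ (‖S‖ * ‖x‖) * ‖v‖ := by gcongr; exact S.le_opNorm x
          _ = ‖S‖ * ‖v‖ * ‖x‖ := by ring)

/-- A bounded operator `T : V → V` is coercive on the range of `S : X → V` if there is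
`β > 0` with `β‖Sx‖² ≤ (Sx, TSx)_V` for all `x ∈ X`. -/
def CoerciveOnRange (S : X →L[ℂ] V) (T : V →L[ℂ] V) : Prop :=
  ∃ β : ℝ, 0 < β ∧ ∀ x : X, β * ‖S x‖ ^ 2 ≤ (⟪T (S x), S x⟫).re

end adj

section auxlemmas
variable {X : Type*} [NormedAddCommGroup X] [InnerProductSpace ℂ X] [CompleteSpace X]

lemma rieszJ_inner (ℓ : ADual X) (y : X) : ⟪rieszJ ℓ, y⟫ = starRingEnd ℂ (ℓ y) :=
  InnerProductSpace.toDual_symm_apply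

/-- Evaluation at a point, as a continuous linear map on the anti-dual. -/
def evalCLM (x : X) : ADual X →L[ℂ] ℂ :=
  LinearMap.mkContinuous
    { toFun := fun g => g x
      map_add' := fun g h => rfl
      map_smul' := fun c g => rfl }
    ‖x‖ (fun g => by simpa [mul_comm] using g.le_opNorm x)

lemma apply_eigen {A : X →L[ℂ] ADual X} {lam : ℕ → ℝ} {e : ℕ → X} {l : ℕ → ADual X}
    (hspec : SpectralData A lam e l) (n : ℕ) (y : X) :
    (A (e n)) y = (lam n : ℂ) * ⟪y, e n⟫ := by
  have h := rieszJ_inner (A (e n)) y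
  rw [hspec.eig n] at h
  calc (A (e n)) y = starRingEnd ℂ (starRingEnd ℂ ((A (e n)) y)) := (Complex.conj_conj _).symm
    _ = starRingEnd ℂ ⟪(lam n : ℂ) • e n, y⟫ := by rw [h]
    _ = (lam n : ℂ) * ⟪y, e n⟫ := by
        rw [inner_smul_left, map_mul, Complex.conj_conj, inner_conj_symm]

lemma coeff_eq {e : ℕ → X} (he : Orthonormal ℂ e) {a : ℕ → ℂ} {x : X}
    (hx : HasSum (fun n => a n • e n) x) (m : ℕ) : ⟪e m, x⟫ = a m := by
  have h := hx.mapL (innerSL ℂ (e m))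
  have h2 : (fun n => (innerSL ℂ (e m)) (a n • e n)) = fun n => if n = m then a m else 0 := by
    funext n
    rcases eq_or_ne n m with rfl | hnm
    · simp [inner_smul_right, orthonormal_iff_ite.mp he, he.1 n]
    · simp [inner_smul_right, orthonormal_iff_ite.mp he, (Ne.symm hnm : ¬ m = n), hnm]
  rw [h2] at h
  exact h.unique (hasSum_ite_eq m (a m))

lemma hasSum_quadform {A : X →L[ℂ] ADual X} {lam : ℕ → ℝ} {e : ℕ → X} {l : ℕ → ADual X}
    (hspec : SpectralData A lam e l) {a : ℕ → ℂ} {x : X}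
    (hx : HasSum (fun n => a n • e n) x) :
    HasSum (fun n => lam n * ‖a n‖ ^ 2) ((dpair x (A x)).re) := by
  have hA : HasSum (fun n => A (a n • e n)) (A x) := hx.mapL A
  have hev : HasSum (fun n => evalCLM x (A (a n • e n))) (evalCLM x (A x)) := hA.mapL (evalCLM x)
  have hterm : (fun n => evalCLM x (A (a n • e n)))
      = fun n => ((lam n * ‖a n‖ ^ 2 : ℝ) : ℂ) := by
    funext n
    have h1 : evalCLM x (A (a n • e n)) = a n * ((A (e n)) x) := by
      rw [map_smul]; rfl
    have h2 : starRingEnd ℂ (a n) * a n = ((‖a n‖ ^ 2 : ℝ) : ℂ) := by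
      rw [mul_comm, Complex.mul_conj]
      norm_cast
      simp [Complex.normSq_eq_norm_sq]
    rw [h1, apply_eigen hspec n x, ← inner_conj_symm x (e n), coeff_eq hspec.orthonormal hx n,
      Complex.ofReal_mul, ← h2]
    ring
  rw [hterm] at hev
  have hre := hev.mapL Complex.reCLM
  simp only [Complex.reCLM_apply, Complex.ofReal_re] at hre
  have : evalCLM x (A x) = (A x) x := rfl
  have hdp : (dpair x (A x)).re = ((A x) x).re := Complex.conj_re _
  rw [hdp, ← this]
  exact hre

lemma hasSum_apply_ell {e : ℕ → X} {a : ℕ → ℂ} {x : X}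
    (hx : HasSum (fun n => a n • e n) x) (ℓ' : ADual X) :
    HasSum (fun n => starRingEnd ℂ (a n) * ℓ' (e n)) (ℓ' x) := by
  have h := hx.mapL ℓ'
  simpa [ContinuousLinearMap.map_smulₛₗ, smul_eq_mul] using h

end auxlemmas

section auxlemmas2
variable {X V : Type*} [NormedAddCommGroup X] [InnerProductSpace ℂ X] [CompleteSpace X]
  [NormedAddCommGroup V] [InnerProductSpace ℂ V] [CompleteSpace V]

lemma hadj_apply (S : X →L[ℂ] V) (v : V) (x : X) : (hadj S v) x = ⟪S x, v⟫ := rfl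

lemma dpair_fact (S : X →L[ℂ] V) (T : V →L[ℂ] V) (x : X) :
    dpair x (((hadj S).comp (T.comp S)) x) = ⟪T (S x), S x⟫ := by
  show starRingEnd ℂ ⟪S x, T (S x)⟫ = _
  exact inner_conj_symm _ _

end auxlemmas2
set_option maxHeartbeats 1000000 in
/-- Regularized Factorization Method: if the positive operator
`A = S*TS` with `S` compact and injective and `T` coercive on `Range(S)`, and `x_α`
is the regularized solution of `Ax = ℓ` for a family of filter functions, then
`ℓ ∈ Range(S*)` iff `liminf_{α→0} ⟨x_α, Ax_α⟩ < ∞`. -/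
theorem regularized_factorization_method
    {X V : Type*}
    [NormedAddCommGroup X] [InnerProductSpace ℂ X] [CompleteSpace X] [SeparableSpace X]
    [NormedAddCommGroup V] [InnerProductSpace ℂ V] [CompleteSpace V]
    (A : X →L[ℂ] ADual X) (hpos : IsPositiveOp A)
    (S : X →L[ℂ] V) (T : V →L[ℂ] V)
    (hAS : A = (hadj S).comp (T.comp S))
    (hScpt : IsCompactOperator ⇑S) (hSinj : Function.Injective ⇑S)
    (hT : CoerciveOnRange S T)
    (lam : ℕ → ℝ) (e : ℕ → X) (l : ℕ → ADual X)
    (hspec : SpectralData A lam e l)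
    (Creg : ℝ) (f : ℝ → ℝ → ℝ) (hf : IsFilterFamily lam Creg f)
    (ℓ : ADual X) (xa : ℝ → X) (hxa : IsRegSolution lam e f ℓ xa) :
    ℓ ∈ Set.range ⇑(hadj S) ↔
      Filter.liminf (fun α => ENNReal.ofReal ((dpair (xa α) (A (xa α))).re))
        (𝓝[>] (0 : ℝ)) < ⊤ := by
  obtain ⟨β, hβ, hcoer⟩ := hT
  obtain ⟨hCreg, hf1, hfb⟩ := hf
  set b : ℕ → ℂ := fun n => ℓ (e n) with hbdef
  set Q : X → ℝ := fun x => (dpair x (A x)).re with hQdef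
  have hQinner : ∀ x : X, dpair x (A x) = ⟪T (S x), S x⟫ := by
    intro x; rw [hAS]; exact dpair_fact S T x
  have hQnonneg : ∀ x : X, 0 ≤ Q x := by
    intro x
    rw [hQdef]; dsimp only; rw [hQinner]
    have h1 := hcoer x
    have h2 : 0 ≤ β * ‖S x‖ ^ 2 := by positivity
    linarith
  have hlampos : ∀ n, 0 < lam n := hspec.pos
  have hlamIoc : ∀ n, lam n ∈ Set.Ioc (0 : ℝ) (lam 0) :=
    fun n => ⟨hlampos n, hspec.anti (Nat.zero_le n)⟩
  -- coefficients of `xa α`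
  have hcoef : ∀ n, starRingEnd ℂ (dpair (e n) ℓ) = b n := by
    intro n; simp [dpair, hbdef]
  have hxa' : ∀ α : ℝ, 0 < α →
      HasSum (fun n => ((((f α (lam n) / lam n : ℝ) : ℂ) * b n)) • e n) (xa α) := by
    intro α hα
    have := hxa α hα
    simpa only [hcoef] using this
  -- the quadratic form at `xa α` as a series
  have hQα : ∀ α : ℝ, 0 < α →
      HasSum (fun n => f α (lam n) ^ 2 * ‖b n‖ ^ 2 / lam n) (Q (xa α)) := by
    intro α hα
    have h := hasSum_quadform hspec (hxa' α hα)
    have heq : (fun n => lam n * ‖(((f α (lam n) / lam n : ℝ) : ℂ) * b n)‖ ^ 2)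
        = fun n => f α (lam n) ^ 2 * ‖b n‖ ^ 2 / lam n := by
      funext n
      have h0 : (0:ℝ) < lam n := hlampos n
      have hfn : 0 ≤ f α (lam n) := (hfb α hα _ (hlamIoc n)).1
      rw [norm_mul, Complex.norm_real, Real.norm_eq_abs, _root_.abs_of_nonneg (by positivity)]
      field_simp
    rw [heq] at h
    exact h
  -- `ℓ (xa α)` as a series
  have hPα : ∀ α : ℝ, 0 < α →
      HasSum (fun n => f α (lam n) * ‖b n‖ ^ 2 / lam n) ((ℓ (xa α)).re) ∧
        ℓ (xa α) = (((ℓ (xa α)).re : ℝ) : ℂ) := by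
    intro α hα
    have h := hasSum_apply_ell (hxa' α hα) ℓ
    have heq : (fun n => starRingEnd ℂ ((((f α (lam n) / lam n : ℝ) : ℂ) * b n)) * ℓ (e n))
        = fun n => (((f α (lam n) * ‖b n‖ ^ 2 / lam n : ℝ) : ℂ)) := by
      funext n
      have h0 : (0:ℝ) < lam n := hlampos n
      have hcb : starRingEnd ℂ (b n) * b n = ((‖b n‖ ^ 2 : ℝ) : ℂ) := by
        rw [mul_comm, Complex.mul_conj]
        norm_cast
        simp [Complex.normSq_eq_norm_sq]
      rw [map_mul, Complex.conj_ofReal]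
      push_cast
      rw [mul_assoc, hcb]
      push_cast
      ring
    rw [heq] at h
    have hre := h.mapL Complex.reCLM
    simp only [Complex.reCLM_apply, Complex.ofReal_re] at hre
    refine ⟨hre, ?_⟩
    exact (h.unique (hre.mapL Complex.ofRealCLM))
  constructor
  · -- forward direction
    rintro ⟨v, rfl⟩
    set C := ‖v‖ ^ 2 / β with hCdef
    have hC0 : 0 ≤ C := by positivity
    have hbound : ∀ x : X, ‖(hadj S v) x‖ ^ 2 ≤ C * Q x := by
      intro x
      have h1 : ‖(hadj S v) x‖ ≤ ‖S x‖ * ‖v‖ := by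
        rw [hadj_apply]; exact norm_inner_le_norm _ _
      have h2 : β * ‖S x‖ ^ 2 ≤ Q x := by
        rw [hQdef]; dsimp only; rw [hQinner]; exact hcoer x
      have h3 : ‖(hadj S v) x‖ ^ 2 ≤ ‖S x‖ ^ 2 * ‖v‖ ^ 2 := by
        rw [← mul_pow]
        exact pow_le_pow_left₀ (norm_nonneg _) h1 2
      rw [hCdef]
      rw [div_mul_eq_mul_div, le_div_iff₀ hβ]
      calc ‖(hadj S v) x‖ ^ 2 * β ≤ (‖S x‖ ^ 2 * ‖v‖ ^ 2) * β :=
            mul_le_mul_of_nonneg_right h3 hβ.le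
        _ = ‖v‖ ^ 2 * (β * ‖S x‖ ^ 2) := by ring
        _ ≤ ‖v‖ ^ 2 * Q x := mul_le_mul_of_nonneg_left h2 (by positivity)
    have hK : ∀ α : ℝ, 0 < α → Q (xa α) ≤ Creg * (Creg * C) := by
      intro α hα
      obtain ⟨hre, hval⟩ := hPα α hα
      set P := ((hadj S v) (xa α)).re with hPdef
      have hP0 : 0 ≤ P := by
        refine hasSum_le (fun n => ?_) hasSum_zero hre
        have h0 : (0:ℝ) < lam n := hlampos n
        have hfn := (hfb α hα _ (hlamIoc n)).1
        positivity
      have hQP : Q (xa α) ≤ Creg * P := by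
        have hmul := hre.mul_left Creg
        refine hasSum_le (fun n => ?_) (hQα α hα) hmul
        have h0 : (0:ℝ) < lam n := hlampos n
        have hfn := hfb α hα _ (hlamIoc n)
        have : f α (lam n) ^ 2 ≤ Creg * f α (lam n) := by nlinarith [hfn.1, hfn.2]
        have hb2 : (0:ℝ) ≤ ‖b n‖ ^ 2 / lam n := by positivity
        calc f α (lam n) ^ 2 * ‖b n‖ ^ 2 / lam n
            = f α (lam n) ^ 2 * (‖b n‖ ^ 2 / lam n) := by ring
          _ ≤ (Creg * f α (lam n)) * (‖b n‖ ^ 2 / lam n) := by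
              exact mul_le_mul_of_nonneg_right this hb2
          _ = Creg * (f α (lam n) * ‖b n‖ ^ 2 / lam n) := by ring
      have hnorm : ‖(hadj S v) (xa α)‖ = P := by
        rw [hval, hPdef, Complex.norm_real, Real.norm_eq_abs, _root_.abs_of_nonneg hP0]
      have hPsq : P ^ 2 ≤ C * Q (xa α) := by
        rw [← hnorm]; exact hbound (xa α)
      rcases hP0.eq_or_lt with hP | hP
      · have h7 : Q (xa α) ≤ 0 := by rw [← hP, mul_zero] at hQP; exact hQP
        have h8 : (0:ℝ) ≤ Creg * (Creg * C) := by positivity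
        linarith
      · have h5 : P * P ≤ (C * Creg) * P := by
          calc P * P = P ^ 2 := (sq P).symm
            _ ≤ C * Q (xa α) := hPsq
            _ ≤ C * (Creg * P) := mul_le_mul_of_nonneg_left hQP hC0
            _ = (C * Creg) * P := by ring
        have h6 : P ≤ C * Creg := le_of_mul_le_mul_right h5 hP
        calc Q (xa α) ≤ Creg * P := hQP
          _ ≤ Creg * (C * Creg) := mul_le_mul_of_nonneg_left h6 hCreg.le
          _ = Creg * (Creg * C) := by ring
    have hev : ∀ᶠ α in 𝓝[>] (0:ℝ),
        ENNReal.ofReal (Q (xa α)) ≤ ENNReal.ofReal (Creg * (Creg * C)) := by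
      filter_upwards [self_mem_nhdsWithin] with α hα
      exact ENNReal.ofReal_le_ofReal (hK α hα)
    calc Filter.liminf (fun α => ENNReal.ofReal (Q (xa α))) (𝓝[>] (0:ℝ))
        ≤ Filter.liminf (fun _ => ENNReal.ofReal (Creg * (Creg * C))) (𝓝[>] (0:ℝ)) :=
          Filter.liminf_le_liminf hev
      _ = ENNReal.ofReal (Creg * (Creg * C)) := Filter.liminf_const _
      _ < ⊤ := ENNReal.ofReal_lt_top
  · -- backward direction
    intro hfin
    set Lf := Filter.liminf (fun α => ENNReal.ofReal (Q (xa α))) (𝓝[>] (0:ℝ)) with hLf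
    set M := Lf.toReal + 1 with hM
    have hM0 : (0:ℝ) < M := by
      have := ENNReal.toReal_nonneg (a := Lf); rw [hM]; linarith
    have hLM : Lf < ENNReal.ofReal M := by
      conv_lhs => rw [← ENNReal.ofReal_toReal hfin.ne]
      rw [ENNReal.ofReal_lt_ofReal_iff hM0, hM]
      linarith
    have hfreq : ∃ᶠ α in 𝓝[>] (0:ℝ), 0 < α ∧ Q (xa α) < M := by
      have h1 : ∃ᶠ α in 𝓝[>] (0:ℝ), ENNReal.ofReal (Q (xa α)) < ENNReal.ofReal M :=
        Filter.frequently_lt_of_liminf_lt (by isBoundedDefault) hLM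
      refine (h1.and_eventually self_mem_nhdsWithin).mono ?_
      rintro α ⟨h2, h3⟩
      exact ⟨h3, (ENNReal.ofReal_lt_ofReal_iff_of_nonneg (hQnonneg _)).mp h2⟩
    -- partial sums of the Picard series are bounded by M
    have hFsum : ∀ F : Finset ℕ, ∑ n ∈ F, ‖b n‖ ^ 2 / lam n ≤ M := by
      intro F
      by_contra hlt
      push_neg at hlt
      have ht : Filter.Tendsto (fun α => ∑ n ∈ F, f α (lam n) ^ 2 * ‖b n‖ ^ 2 / lam n)
          (𝓝[>] (0:ℝ)) (𝓝 (∑ n ∈ F, ‖b n‖ ^ 2 / lam n)) := by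
        refine tendsto_finset_sum F fun n _ => ?_
        have h1 : Filter.Tendsto (fun α => f α (lam n)) (𝓝[>] (0:ℝ)) (𝓝 1) :=
          hf1 _ (hlamIoc n)
        have h2 := (h1.pow 2).mul_const (‖b n‖ ^ 2 / lam n)
        simp only [one_pow, one_mul] at h2
        refine h2.congr fun α => by ring
      have hevg : ∀ᶠ α in 𝓝[>] (0:ℝ),
          M < ∑ n ∈ F, f α (lam n) ^ 2 * ‖b n‖ ^ 2 / lam n :=
        ht.eventually (eventually_gt_nhds hlt)
      obtain ⟨α, ⟨hα, hQM⟩, hgt⟩ := (hfreq.and_eventually hevg).exists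
      have hle : ∑ n ∈ F, f α (lam n) ^ 2 * ‖b n‖ ^ 2 / lam n ≤ Q (xa α) := by
        refine sum_le_hasSum F (fun n _ => ?_) (hQα α hα)
        have h0 : (0:ℝ) < lam n := hlampos n
        positivity
      linarith
    have hnn : ∀ n, 0 ≤ ‖b n‖ ^ 2 / lam n := by
      intro n; have h0 : (0:ℝ) < lam n := hlampos n; positivity
    have hsumb : Summable (fun n => ‖b n‖ ^ 2 / lam n) := summable_of_sum_le hnn hFsum
    have htsumb : ∑' n, ‖b n‖ ^ 2 / lam n ≤ M := Summable.tsum_le_of_sum_le hsumb hFsum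
    -- key bound: ‖ℓ x‖ ^ 2 ≤ M * ‖T‖ * ‖S x‖ ^ 2
    have hkey : ∀ x : X, ‖ℓ x‖ ≤ Real.sqrt (M * ‖T‖) * ‖S x‖ := by
      intro x
      obtain ⟨a, hx⟩ : ∃ a : ℕ → ℂ, HasSum (fun n => a n • e n) x := by
        let B : HilbertBasis ℕ ℂ X := HilbertBasis.mk hspec.orthonormal hspec.complete.ge
        refine ⟨fun n => B.repr x n, ?_⟩
        have hBe : ⇑B = e := HilbertBasis.coe_mk _ _
        rw [← hBe]
        exact B.hasSum_repr x
      have hQx := hasSum_quadform hspec hx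
      have hLx := hasSum_apply_ell hx ℓ
      have hCS : ∀ F : Finset ℕ, ∑ n ∈ F, ‖a n‖ * ‖b n‖ ≤ Real.sqrt (Q x * M) := by
        intro F
        have h1 : (∑ n ∈ F, ‖a n‖ * ‖b n‖) ^ 2
            ≤ (∑ n ∈ F, lam n * ‖a n‖ ^ 2) * (∑ n ∈ F, ‖b n‖ ^ 2 / lam n) := by
          have := F.sum_mul_sq_le_sq_mul_sq (fun n => Real.sqrt (lam n) * ‖a n‖)
            (fun n => ‖b n‖ / Real.sqrt (lam n))
          have heq1 : ∀ n ∈ F, Real.sqrt (lam n) * ‖a n‖ * (‖b n‖ / Real.sqrt (lam n))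
              = ‖a n‖ * ‖b n‖ := by
            intro n _
            have h0 : (0:ℝ) < Real.sqrt (lam n) := Real.sqrt_pos.mpr (hlampos n)
            field_simp
          have heq2 : ∀ n ∈ F, (Real.sqrt (lam n) * ‖a n‖) ^ 2 = lam n * ‖a n‖ ^ 2 := by
            intro n _
            rw [mul_pow, Real.sq_sqrt (hlampos n).le]
          have heq3 : ∀ n ∈ F, (‖b n‖ / Real.sqrt (lam n)) ^ 2 = ‖b n‖ ^ 2 / lam n := by
            intro n _
            rw [div_pow, Real.sq_sqrt (hlampos n).le]
          rw [Finset.sum_congr rfl heq1, Finset.sum_congr rfl heq2,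
            Finset.sum_congr rfl heq3] at this
          exact this
        have h2 : ∑ n ∈ F, lam n * ‖a n‖ ^ 2 ≤ Q x := by
          refine sum_le_hasSum F (fun n _ => ?_) hQx
          have h0 : (0:ℝ) < lam n := hlampos n
          positivity
        have h3 : ∑ n ∈ F, ‖b n‖ ^ 2 / lam n ≤ M := hFsum F
        have h4 : (0:ℝ) ≤ ∑ n ∈ F, ‖a n‖ * ‖b n‖ :=
          Finset.sum_nonneg fun n _ => by positivity
        rw [show Real.sqrt (Q x * M) = Real.sqrt (Q x * M) from rfl]
        rw [← Real.sqrt_sq h4]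
        refine Real.sqrt_le_sqrt ?_
        calc (∑ n ∈ F, ‖a n‖ * ‖b n‖) ^ 2
            ≤ (∑ n ∈ F, lam n * ‖a n‖ ^ 2) * (∑ n ∈ F, ‖b n‖ ^ 2 / lam n) := h1
          _ ≤ Q x * M := by
              have hs1 : (0:ℝ) ≤ ∑ n ∈ F, lam n * ‖a n‖ ^ 2 :=
                Finset.sum_nonneg fun n _ => by
                  have h0 : (0:ℝ) < lam n := hlampos n; positivity
              have hs2 : (0:ℝ) ≤ ∑ n ∈ F, ‖b n‖ ^ 2 / lam n :=
                Finset.sum_nonneg fun n _ => hnn n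
              exact mul_le_mul h2 h3 hs2 (hQnonneg x)
      have hsumab : Summable (fun n => ‖a n‖ * ‖b n‖) :=
        summable_of_sum_le (fun n => by positivity) hCS
      have hnorm1 : ‖ℓ x‖ ≤ ∑' n, ‖a n‖ * ‖b n‖ := by
        have h5 : ℓ x = ∑' n, starRingEnd ℂ (a n) * b n := hLx.tsum_eq.symm
        rw [h5]
        have h6 : (fun n => ‖starRingEnd ℂ (a n) * b n‖) = fun n => ‖a n‖ * ‖b n‖ := by
          funext n; rw [norm_mul, RCLike.norm_conj]
        calc ‖∑' n, starRingEnd ℂ (a n) * b n‖ ≤ ∑' n, ‖starRingEnd ℂ (a n) * b n‖ :=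
              norm_tsum_le_tsum_norm (by rw [h6]; exact hsumab)
          _ = ∑' n, ‖a n‖ * ‖b n‖ := by rw [h6]
      have hnorm2 : ‖ℓ x‖ ≤ Real.sqrt (Q x * M) :=
        hnorm1.trans (Summable.tsum_le_of_sum_le hsumab hCS)
      have hQT : Q x ≤ ‖T‖ * ‖S x‖ ^ 2 := by
        rw [hQdef]; dsimp only; rw [hQinner]
        calc (⟪T (S x), S x⟫ : ℂ).re ≤ ‖(⟪T (S x), S x⟫ : ℂ)‖ := Complex.re_le_norm _
          _ ≤ ‖T (S x)‖ * ‖S x‖ := norm_inner_le_norm _ _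
          _ ≤ (‖T‖ * ‖S x‖) * ‖S x‖ := by
              gcongr; exact T.le_opNorm _
          _ = ‖T‖ * ‖S x‖ ^ 2 := by ring
      calc ‖ℓ x‖ ≤ Real.sqrt (Q x * M) := hnorm2
        _ ≤ Real.sqrt ((‖T‖ * ‖S x‖ ^ 2) * M) := by
            refine Real.sqrt_le_sqrt ?_
            have hMnn : (0:ℝ) ≤ M := hM0.le
            nlinarith [hQnonneg x]
        _ = Real.sqrt (M * ‖T‖) * ‖S x‖ := by
            rw [show (‖T‖ * ‖S x‖ ^ 2) * M = (M * ‖T‖) * ‖S x‖ ^ 2 by ring,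
              Real.sqrt_mul (by positivity), Real.sqrt_sq (norm_nonneg _)]
    -- build `v` via Hahn-Banach
    set K := Real.sqrt (M * ‖T‖) with hKdef
    have hK0 : 0 ≤ K := Real.sqrt_nonneg _
    let p : Submodule ℂ V := LinearMap.range (S : X →ₗ[ℂ] V)
    let eqv : X ≃ₗ[ℂ] p := LinearEquiv.ofInjective (S : X →ₗ[ℂ] V) hSinj
    have hSsymm : ∀ w : p, S (eqv.symm w) = (w : V) := by
      intro w
      have h1 : (↑(eqv (eqv.symm w)) : V) = S (eqv.symm w) :=
        LinearEquiv.ofInjective_apply (f := (S : X →ₗ[ℂ] V)) (eqv.symm w)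
      rw [LinearEquiv.apply_symm_apply] at h1
      exact h1.symm
    let φ : p →ₗ[ℂ] ℂ :=
      { toFun := fun w => starRingEnd ℂ (ℓ (eqv.symm w))
        map_add' := fun w w' => by simp [map_add]
        map_smul' := fun c w => by
          simp only [LinearEquiv.map_smul, RingHom.id_apply, smul_eq_mul]
          rw [ContinuousLinearMap.map_smulₛₗ]
          simp [smul_eq_mul] }
    have hφ : ∀ w : p, φ w = starRingEnd ℂ (ℓ (eqv.symm w)) := fun w => rfl
    let fcl : p →L[ℂ] ℂ := LinearMap.mkContinuous φ K (fun w => by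
      rw [hφ]
      calc ‖starRingEnd ℂ (ℓ (eqv.symm w))‖ = ‖ℓ (eqv.symm w)‖ := RCLike.norm_conj _
        _ ≤ K * ‖S (eqv.symm w)‖ := hkey _
        _ = K * ‖w‖ := by rw [hSsymm w]; rfl)
    obtain ⟨g, hg, -⟩ := exists_extension_norm_eq p fcl
    refine ⟨(InnerProductSpace.toDual ℂ V).symm g, ?_⟩
    ext x
    have h1 : ⟪(InnerProductSpace.toDual ℂ V).symm g, S x⟫ = g (S x) :=
      InnerProductSpace.toDual_symm_apply
    have hm : S x ∈ p := ⟨x, rfl⟩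
    have h2 : g (S x) = starRingEnd ℂ (ℓ x) := by
      have h4 : eqv.symm ⟨S x, hm⟩ = x := by
        apply hSinj
        rw [hSsymm ⟨S x, hm⟩]
      have h3 := hg ⟨S x, hm⟩
      rw [h3]
      show φ ⟨S x, hm⟩ = _
      rw [hφ, h4]
    show ⟪S x, (InnerProductSpace.toDual ℂ V).symm g⟫ = ℓ x
    rw [← inner_conj_symm, h1, h2, Complex.conj_conj]
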